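/- The bilinear form 𝔄 is symmetric (𝔄(τ, σ) = 𝔄(σ, τ) for all σ, τ ∈ P) if m ≡ 0 or 1 (mod 4), and antisymmetric (𝔄(τ, σ) = −𝔄(σ, τ) for all σ, τ ∈ P) if m ≡ 2 or 3 (mod 4). -/

import Mathlib

noncomputable section

/-- The spinor space `P`: complex functions on subsets of `Fin m`
(the fermionic Fock model of the exterior algebra of `ℂ^m`). -/
abbrev SpinorSpace (m : ℕ) := Finset (Fin m) → ℂ

/-- The creation operator `c_j`. -/
def creation {m : ℕ} (j : Fin m) (f : SpinorSpace m) : SpinorSpace m := fun S =>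
  if j ∈ S then (-1 : ℂ) ^ (S.filter fun i => i < j).card * f (S.erase j) else 0

/-- The annihilation operator `a_j`. -/
def annihilation {m : ℕ} (j : Fin m) (f : SpinorSpace m) : SpinorSpace m := fun S =>
  if j ∈ S then 0 else (-1 : ℂ) ^ (S.filter fun i => i < j).card * f (insert j S)

/-- The gamma operators `Γ_I`, `I = 1, …, 2m`, here indexed by `Fin (2 * m)` (0-based):
`Γ_j = c_j + a_j` and `Γ_{m+j} = i (c_j − a_j)` for `j = 1, …, m`. -/
def gammaOp {m : ℕ} (I : Fin (2 * m)) (f : SpinorSpace m) : SpinorSpace m :=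
  if h : (I : ℕ) < m then
    creation ⟨(I : ℕ), h⟩ f + annihilation ⟨(I : ℕ), h⟩ f
  else
    Complex.I • (creation ⟨(I : ℕ) - m, by have := I.isLt; omega⟩ f
      - annihilation ⟨(I : ℕ) - m, by have := I.isLt; omega⟩ f)

/-- The Hermitian inner product `⟨f, g⟩ = Σ_S conj (f S) * g S` on the spinor space. -/
def herm {m : ℕ} (f g : SpinorSpace m) : ℂ :=
  ∑ S : Finset (Fin m), (starRingEnd ℂ) (f S) * g S

/-- The composition `Γ_{I₁} ∘ Γ_{I₂} ∘ ⋯ ∘ Γ_{I_k}` corresponding to a list of indices. -/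
def gammaProd {m : ℕ} (l : List (Fin (2 * m))) : SpinorSpace m → SpinorSpace m :=
  l.foldr (fun I F => gammaOp I ∘ F) id

/-- The conjugation operator `κ`. -/
def conjOp {m : ℕ} (f : SpinorSpace m) : SpinorSpace m := fun S => (starRingEnd ℂ) (f S)

/-- The conjugate-linear operator `A = Γ_1 ∘ Γ_2 ∘ ⋯ ∘ Γ_m ∘ κ`. -/
def opA (m : ℕ) : SpinorSpace m → SpinorSpace m :=
  gammaProd (List.ofFn fun j : Fin m =>
    (⟨(j : ℕ), by have := j.isLt; omega⟩ : Fin (2 * m))) ∘ conjOp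

/-- The conjugate-linear operator `B = Γ_{m+1} ∘ Γ_{m+2} ∘ ⋯ ∘ Γ_{2m} ∘ κ`. -/
def opB (m : ℕ) : SpinorSpace m → SpinorSpace m :=
  gammaProd (List.ofFn fun j : Fin m =>
    (⟨m + (j : ℕ), by have := j.isLt; omega⟩ : Fin (2 * m))) ∘ conjOp

/-- The bilinear form `𝔄(σ, τ) = ⟨A σ, τ⟩`. -/
def formA {m : ℕ} (σ τ : SpinorSpace m) : ℂ := herm (opA m σ) τ

/-- The bilinear form `𝔅(σ, τ) = ⟨B σ, τ⟩`. -/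
def formB {m : ℕ} (σ τ : SpinorSpace m) : ℂ := herm (opB m σ) τ

section Aux

variable {m : ℕ}

/-- Toggle membership of `j` in `S`. -/
def toggle (j : Fin m) (S : Finset (Fin m)) : Finset (Fin m) :=
  if j ∈ S then S.erase j else insert j S

/-- The accumulated sign exponent of applying the gamma operators along a list. -/
def sgnAux : List (Fin m) → Finset (Fin m) → ℕ
  | [], _ => 0
  | j :: l, S => (S.filter fun i => i < j).card + sgnAux l (toggle j S)

lemma gammaOp_emb (j : Fin m) (f : SpinorSpace m) (S : Finset (Fin m)) :
    gammaOp (⟨(j : ℕ), by have := j.isLt; omega⟩ : Fin (2 * m)) f S =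
      (-1 : ℂ) ^ (S.filter fun i => i < j).card * f (toggle j S) := by
  have h : ((⟨(j : ℕ), by have := j.isLt; omega⟩ : Fin (2 * m)) : ℕ) < m := j.isLt
  rw [gammaOp, dif_pos h]
  have hj : (⟨((⟨(j : ℕ), by have := j.isLt; omega⟩ : Fin (2 * m)) : ℕ), h⟩ : Fin m) = j :=
    Fin.ext rfl
  rw [hj]
  simp only [Pi.add_apply, creation, annihilation, toggle]
  by_cases hjS : j ∈ S <;> simp [hjS]

lemma gammaProd_map_eval (l : List (Fin m)) (f : SpinorSpace m) (S : Finset (Fin m)) :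
    gammaProd (l.map fun j : Fin m =>
        (⟨(j : ℕ), by have := j.isLt; omega⟩ : Fin (2 * m))) f S =
      (-1 : ℂ) ^ sgnAux l S * f (l.foldl (fun S j => toggle j S) S) := by
  induction l generalizing S with
  | nil => simp [gammaProd, sgnAux]
  | cons j l ih =>
      have : gammaProd ((j :: l).map fun j : Fin m =>
          (⟨(j : ℕ), by have := j.isLt; omega⟩ : Fin (2 * m))) f
          = gammaOp (⟨(j : ℕ), by have := j.isLt; omega⟩ : Fin (2 * m))
              (gammaProd (l.map fun j : Fin m =>
                (⟨(j : ℕ), by have := j.isLt; omega⟩ : Fin (2 * m))) f) := rfl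
      rw [this, gammaOp_emb, ih, sgnAux]
      simp [pow_add, mul_assoc, List.foldl]

lemma toggle_eq_symmDiff (j : Fin m) (S : Finset (Fin m)) :
    toggle j S = symmDiff S {j} := by
  ext i
  by_cases hjS : j ∈ S <;> by_cases hij : i = j <;>
    simp [toggle, hjS, hij, Finset.mem_symmDiff]

lemma foldl_toggle_nodup (l : List (Fin m)) (hl : l.Nodup) (S : Finset (Fin m)) :
    l.foldl (fun S j => toggle j S) S = symmDiff S l.toFinset := by
  induction l generalizing S with
  | nil => simpa using (symmDiff_bot S).symm
  | cons j l ih =>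
      obtain ⟨hj, hl'⟩ := List.nodup_cons.mp hl
      have hjl : j ∉ l.toFinset := by simpa using hj
      rw [List.foldl_cons, ih hl', toggle_eq_symmDiff, symmDiff_assoc]
      congr 1
      ext i
      by_cases hij : i = j <;> simp [Finset.mem_symmDiff, hij, hjl]

lemma toggle_compl (j : Fin m) (S : Finset (Fin m)) :
    toggle j Sᶜ = (toggle j S)ᶜ := by
  ext i
  by_cases hjS : j ∈ S <;> by_cases hij : i = j <;>
    simp [toggle, hjS, hij, Finset.mem_compl]

lemma filter_lt_card_add (j : Fin m) (S : Finset (Fin m)) :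
    (S.filter fun i => i < j).card + (Sᶜ.filter fun i => i < j).card = (j : ℕ) := by
  have hdisj : Disjoint (S.filter fun i => i < j) (Sᶜ.filter fun i => i < j) :=
    Finset.disjoint_filter_filter disjoint_compl_right
  rw [← Finset.card_union_of_disjoint hdisj, ← Finset.filter_union, Finset.union_compl]
  have : (Finset.univ.filter fun i : Fin m => i < j) = Finset.Iio j := by
    ext i; simp
  rw [this, Fin.card_Iio]

lemma sgnAux_add_compl (l : List (Fin m)) (S : Finset (Fin m)) :
    sgnAux l S + sgnAux l Sᶜ = (l.map Fin.val).sum := by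
  induction l generalizing S with
  | nil => simp [sgnAux]
  | cons j l ih =>
      simp only [sgnAux, List.map_cons, List.sum_cons, toggle_compl]
      have := ih (toggle j S)
      have hcnt := filter_lt_card_add j S
      omega

lemma opA_eval (σ : SpinorSpace m) (T : Finset (Fin m)) :
    opA m σ T = (-1 : ℂ) ^ sgnAux (List.finRange m) T * (starRingEnd ℂ) (σ Tᶜ) := by
  have h1 : opA m σ T = gammaProd ((List.finRange m).map fun j : Fin m =>
      (⟨(j : ℕ), by have := j.isLt; omega⟩ : Fin (2 * m))) (conjOp σ) T := by
    rw [opA, Function.comp_apply, List.ofFn_eq_map]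
  rw [h1, gammaProd_map_eval, foldl_toggle_nodup _ (List.nodup_finRange m),
    List.toFinset_finRange]
  have : symmDiff T (Finset.univ : Finset (Fin m)) = Tᶜ := by
    ext i; simp [Finset.mem_symmDiff]
  rw [this]; rfl

lemma formA_eval (σ τ : SpinorSpace m) :
    formA σ τ = ∑ T : Finset (Fin m),
      (-1 : ℂ) ^ sgnAux (List.finRange m) T * σ Tᶜ * τ T := by
  rw [formA, herm]
  refine Finset.sum_congr rfl fun T _ => ?_
  rw [opA_eval, map_mul, map_pow, map_neg, map_one, Complex.conj_conj]

end Aux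

lemma parity_helper (m N : ℕ) (hm : 1 ≤ m) (hg : N * 2 = m * (m - 1)) :
    (m % 4 = 0 ∨ m % 4 = 1 → N % 2 = 0) ∧ (m % 4 = 2 ∨ m % 4 = 3 → N % 2 = 1) := by
  have hsq : N * 2 + m = m * m := by
    obtain ⟨k, rfl⟩ : ∃ k, m = k + 1 := ⟨m - 1, by omega⟩
    have h1 : (k + 1) * (k + 1) = (k + 1) * k + (k + 1) := by ring
    simp only [Nat.add_sub_cancel] at hg
    omega
  constructor <;> rintro (h | h)
  · obtain ⟨q, rfl⟩ : ∃ q, m = 4 * q := ⟨m / 4, by omega⟩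
    have e : (4 * q) * (4 * q) = 16 * (q * q) := by ring
    rw [e] at hsq; generalize q * q = a at hsq; omega
  · obtain ⟨q, rfl⟩ : ∃ q, m = 4 * q + 1 := ⟨m / 4, by omega⟩
    have e : (4 * q + 1) * (4 * q + 1) = 16 * (q * q) + 8 * q + 1 := by ring
    rw [e] at hsq; generalize q * q = a at hsq; omega
  · obtain ⟨q, rfl⟩ : ∃ q, m = 4 * q + 2 := ⟨m / 4, by omega⟩
    have e : (4 * q + 2) * (4 * q + 2) = 16 * (q * q) + 16 * q + 4 := by ring
    rw [e] at hsq; generalize q * q = a at hsq; omega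
  · obtain ⟨q, rfl⟩ : ∃ q, m = 4 * q + 3 := ⟨m / 4, by omega⟩
    have e : (4 * q + 3) * (4 * q + 3) = 16 * (q * q) + 24 * q + 9 := by ring
    rw [e] at hsq; generalize q * q = a at hsq; omega

/-- the bilinear form `𝔄` is symmetric if `m ≡ 0, 1 (mod 4)` and
antisymmetric if `m ≡ 2, 3 (mod 4)`. -/
theorem formA_symm_or_antisymm (m : ℕ) (hm : 1 ≤ m) :
    (m % 4 = 0 ∨ m % 4 = 1 → ∀ σ τ : SpinorSpace m, formA τ σ = formA σ τ) ∧
    (m % 4 = 2 ∨ m % 4 = 3 → ∀ σ τ : SpinorSpace m, formA τ σ = -formA σ τ) := by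
  set N : ℕ := ((List.finRange m).map Fin.val).sum with hN
  have hsum : ∀ n : ℕ, (List.range n).sum = ∑ i ∈ Finset.range n, i := by
    intro n
    induction n with
    | zero => simp
    | succ k ih => rw [List.range_succ, List.sum_append, Finset.sum_range_succ, ih]; simp
  have hgauss : N * 2 = m * (m - 1) := by
    rw [hN, show (List.finRange m).map Fin.val = List.range m from
      List.ext_getElem (by simp) (by simp), hsum, Finset.sum_range_id_mul_two]
  -- key identity relating formA τ σ and formA σ τ
  have key : ∀ σ τ : SpinorSpace m, formA τ σ = (-1 : ℂ) ^ N * formA σ τ := by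
    intro σ τ
    rw [formA_eval, formA_eval, Finset.mul_sum]
    have hinv : Function.Involutive (fun S : Finset (Fin m) => Sᶜ) := fun S => compl_compl S
    rw [← Equiv.sum_comp hinv.toPerm
      (fun T => (-1 : ℂ) ^ sgnAux (List.finRange m) T * τ Tᶜ * σ T)]
    refine Finset.sum_congr rfl fun T _ => ?_
    have hco : sgnAux (List.finRange m) T + sgnAux (List.finRange m) Tᶜ = N :=
      sgnAux_add_compl _ _
    have : ((-1 : ℂ) ^ sgnAux (List.finRange m) T) *
        ((-1 : ℂ) ^ sgnAux (List.finRange m) Tᶜ) = (-1 : ℂ) ^ N := by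
      rw [← pow_add, hco]
    have hTc : (-1 : ℂ) ^ sgnAux (List.finRange m) Tᶜ
        = (-1 : ℂ) ^ N * (-1 : ℂ) ^ sgnAux (List.finRange m) T := by
      have hsq : ((-1 : ℂ) ^ sgnAux (List.finRange m) T) *
          ((-1 : ℂ) ^ sgnAux (List.finRange m) T) = 1 := by
        rw [← pow_add]
        exact Even.neg_one_pow ⟨_, rfl⟩
      calc (-1 : ℂ) ^ sgnAux (List.finRange m) Tᶜ
          = ((-1 : ℂ) ^ sgnAux (List.finRange m) T *
            (-1 : ℂ) ^ sgnAux (List.finRange m) Tᶜ) *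
            (-1 : ℂ) ^ sgnAux (List.finRange m) T := by
            rw [mul_comm ((-1:ℂ) ^ sgnAux (List.finRange m) T), mul_assoc, hsq, mul_one]
        _ = (-1 : ℂ) ^ N * (-1 : ℂ) ^ sgnAux (List.finRange m) T := by rw [this]
    show (-1 : ℂ) ^ sgnAux (List.finRange m)
        ((hinv.toPerm) T) * τ ((hinv.toPerm) T)ᶜ * σ ((hinv.toPerm) T)
      = (-1 : ℂ) ^ N * ((-1 : ℂ) ^ sgnAux (List.finRange m) T * σ Tᶜ * τ T)
    have hpT : (hinv.toPerm) T = Tᶜ := rfl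
    rw [hpT, compl_compl, hTc]
    ring
  constructor
  · rintro h σ τ
    have hNe : Even N :=
      Nat.even_iff.mpr ((parity_helper m N hm hgauss).1 h)
    rw [key σ τ, hNe.neg_one_pow, one_mul]
  · rintro h σ τ
    have hNo : Odd N := Nat.odd_iff.mpr ((parity_helper m N hm hgauss).2 h)
    rw [key σ τ, hNo.neg_one_pow, neg_one_mul]
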